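/- arXiv:1809.08263 — 7 statements merged into one kernel-verified Lean document; each statement's English description precedes it below -/
import Mathlib

section
/- Let T ≥ 2 and let k satisfy ⌈T/2⌉ ≤ k. For every matrix A ∈ F_2^{T×m} there exists a matrix P ∈ F_2^{(T+1)×T} such that for every row vector d ∈ F_2^T there exists a row vector d' ∈ F_2^{T+1} with Hamming weight at most k satisfying d'·(P·A) = d·A. In particular, every vector in the row span of A is a sum of at most k rows of the (T+1)-row matrix P·A. -/
lemma zmod2_one_add_ne (x : ZMod 2) : (1 + x ≠ 0) ↔ x = 0 := by revert x; decide

lemma snoc_vecMul (T : ℕ) (v : Fin T → ZMod 2) (c : ZMod 2)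
    (P : Matrix (Fin (T+1)) (Fin T) (ZMod 2))
    (hP : P = Matrix.of fun (i : Fin (T+1)) (j : Fin T) => if (i : ℕ) = T then 1 else if (i : ℕ) = (j : ℕ) then 1 else 0) :
    Matrix.vecMul (Fin.snoc v c) P = fun j => v j + c := by
  funext j
  simp only [Matrix.vecMul, dotProduct, hP]
  rw [Fin.sum_univ_castSucc]
  simp only [Fin.snoc_castSucc, Fin.snoc_last, Matrix.of_apply]
  have hlast : ((Fin.last T : Fin (T+1)) : ℕ) = T := rfl
  have hcast : ∀ i : Fin T, ((Fin.castSucc i : Fin (T+1)) : ℕ) = (i : ℕ) := fun i => rfl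
  simp only [hlast, hcast, if_pos rfl]
  have : ∀ i : Fin T, ¬ ((i : ℕ) = T) := fun i => Nat.ne_of_lt i.isLt
  simp only [if_neg (this _), mul_one]
  rw [Finset.sum_congr rfl (fun i _ => by
    rw [show (if (i : ℕ) = (j : ℕ) then (1:ZMod 2) else 0) = if i = j then 1 else 0 by
      simp [Fin.ext_iff]])]
  simp [Finset.mul_sum, Finset.sum_ite_eq', mul_ite]

/-- For `T ≥ 2` and `⌈T/2⌉ ≤ k`: for every matrix `A ∈ F_2^{T×m}` there is a matrix
`P ∈ F_2^{(T+1)×T}` such that every `d ∈ F_2^T` admits `d' ∈ F_2^{T+1}` of Hamming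
weight at most `k` with `d'·(P·A) = d·A`. -/
theorem stmt4 (T m k : ℕ) (hT : 2 ≤ T) (hk : (T + 1) / 2 ≤ k)
    (A : Matrix (Fin T) (Fin m) (ZMod 2)) :
    ∃ P : Matrix (Fin (T + 1)) (Fin T) (ZMod 2),
      ∀ d : Fin T → ZMod 2, ∃ d' : Fin (T + 1) → ZMod 2,
        (Finset.univ.filter fun i => d' i ≠ 0).card ≤ k ∧
        Matrix.vecMul d' (P * A) = Matrix.vecMul d A := by
  classical
  set P : Matrix (Fin (T+1)) (Fin T) (ZMod 2) :=
    Matrix.of fun (i : Fin (T+1)) (j : Fin T) => if (i : ℕ) = T then 1 else if (i : ℕ) = (j : ℕ) then 1 else 0 with hP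
  refine ⟨P, fun d => ?_⟩
  have cardsnoc : ∀ (v : Fin T → ZMod 2) (c : ZMod 2),
      (Finset.univ.filter fun i : Fin (T+1) => (Fin.snoc (α := fun _ => ZMod 2) v c i) ≠ 0).card
        = (Finset.univ.filter fun i => v i ≠ 0).card + (if c ≠ 0 then 1 else 0) := by
    intro v c
    rw [Finset.card_filter, Finset.card_filter, Fin.sum_univ_castSucc]
    simp [Fin.snoc_castSucc, Fin.snoc_last]
  by_cases hw : (Finset.univ.filter fun i => d i ≠ 0).card ≤ k
  · refine ⟨Fin.snoc d 0, ?_, ?_⟩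
    · rw [cardsnoc d 0]; simpa using hw
    · rw [← Matrix.vecMul_vecMul, snoc_vecMul T d 0 P hP]
      simp
  · refine ⟨Fin.snoc (fun i => 1 + d i) 1, ?_, ?_⟩
    · rw [cardsnoc (fun i => 1 + d i) 1]
      have h0 : (Finset.univ.filter fun i => 1 + d i ≠ 0)
          = (Finset.univ.filter fun i => ¬ (d i ≠ 0)) := by
        apply Finset.filter_congr
        intro i _
        simp [zmod2_one_add_ne]
      rw [h0]
      have hsum := Finset.card_filter_add_card_filter_not
        (s := (Finset.univ : Finset (Fin T))) (p := fun i => d i ≠ 0)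
      simp only [Finset.card_univ, Fintype.card_fin] at hsum
      have : (1 : ZMod 2) ≠ 0 := by decide
      simp only [if_pos this]
      omega
    · rw [← Matrix.vecMul_vecMul, snoc_vecMul T _ 1 P hP]
      have heq : (fun j => (1 : ZMod 2) + d j + 1) = d := by
        funext j
        ring_nf
        rw [show (2 : ZMod 2) = 0 from by decide, zero_add]
      rw [heq]
end

section
/- Let T, k be natural numbers with 1 ≤ k ≤ T. Set Q = ⌊T / ⌈T/k⌉⌋ and T_rem = T − Q·⌈T/k⌉. Then Q·(2^{⌈T/k⌉} − 1) + 2^{T_rem} − 1 ≤ k · 2^{⌈T/k⌉}. -/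
/-- For `1 ≤ k ≤ T`, with `c = ⌈T/k⌉`, `Q = ⌊T/c⌋` and `T_rem = T − Q·c`, we have
`Q·(2^c − 1) + 2^{T_rem} − 1 ≤ k · 2^c`. -/
theorem stmt6 (T k : ℕ) (hk1 : 1 ≤ k) (hkT : k ≤ T) :
    T / ((T + k - 1) / k) * (2 ^ ((T + k - 1) / k) - 1) +
        2 ^ (T - T / ((T + k - 1) / k) * ((T + k - 1) / k)) - 1 ≤
      k * 2 ^ ((T + k - 1) / k) := by
  obtain ⟨c, hc⟩ : ∃ c, (T + k - 1) / k = c := ⟨_, rfl⟩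
  rw [hc]
  have hc1 : 1 ≤ c := by
    rw [← hc]
    exact (Nat.one_le_div_iff hk1).mpr (by omega)
  have hTkc : T ≤ k * c := by
    have h1 := Nat.div_add_mod (T + k - 1) k
    have h2 := Nat.mod_lt (T + k - 1) hk1
    rw [hc] at h1
    omega
  obtain ⟨Q, hQd⟩ : ∃ q, T / c = q := ⟨_, rfl⟩
  rw [hQd]
  have hQk : Q ≤ k := by
    rw [← hQd]
    calc T / c ≤ k * c / c := Nat.div_le_div_right hTkc
    _ = k := Nat.mul_div_cancel k (by omega)
  have h1 := Nat.div_add_mod T c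
  have h2 := Nat.mod_lt T (show 0 < c by omega)
  rw [hQd] at h1
  have hcQ : Q * c = c * Q := Nat.mul_comm Q c
  have hrem : T - Q * c ≤ c := by omega
  obtain ⟨r, hr⟩ : ∃ r, T - Q * c = r := ⟨_, rfl⟩
  rw [hr]
  have hrc : r ≤ c := hr ▸ hrem
  have hqp : (2:ℕ) ^ r ≤ 2 ^ c := Nat.pow_le_pow_right (by norm_num) hrc
  have hp1 : 1 ≤ (2:ℕ) ^ c := Nat.one_le_two_pow
  rcases eq_or_lt_of_le hQk with h | h
  · have hr0 : r = 0 := by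
      have hck : c * Q = k * c := by rw [h, Nat.mul_comm]
      omega
    rw [hr0, pow_zero]
    have hm : Q * (2 ^ c - 1) ≤ Q * 2 ^ c := Nat.mul_le_mul_left Q (Nat.sub_le _ 1)
    have hm2 : Q * 2 ^ c ≤ k * 2 ^ c := Nat.mul_le_mul_right _ hQk
    omega
  · have key : Q * 2 ^ c + 2 ^ c ≤ k * 2 ^ c := by
      calc Q * 2 ^ c + 2 ^ c = (Q + 1) * 2 ^ c := by ring
      _ ≤ k * 2 ^ c := Nat.mul_le_mul_right _ h
    have hm : Q * (2 ^ c - 1) ≤ Q * 2 ^ c := Nat.mul_le_mul_left Q (Nat.sub_le _ 1)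
    omega
end

section
/- Let T ≥ 2 and let k satisfy 1 ≤ k < T. If S is a finite set of vectors in F_2^T such that every nonzero vector v ∈ F_2^T is a sum of at most k elements of S, then |S| ≥ T + 1. -/
/-- For `T ≥ 2` and `1 ≤ k < T`: if every nonzero `v ∈ F_2^T` is a sum of at most
`k` elements of a finite set `S`, then `|S| ≥ T + 1`. -/
theorem stmt8 (T k : ℕ) (hT : 2 ≤ T) (hk1 : 1 ≤ k) (hkT : k < T)
    (S : Finset (Fin T → ZMod 2))
    (hS : ∀ v : Fin T → ZMod 2, v ≠ 0 →
      ∃ S' ⊆ S, S'.Nonempty ∧ S'.card ≤ k ∧ v = ∑ s ∈ S', s) :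
    T + 1 ≤ S.card := by
  by_contra h
  push_neg at h
  have hspan : Submodule.span (ZMod 2) (S : Set (Fin T → ZMod 2)) = ⊤ := by
    rw [eq_top_iff]
    intro v _
    by_cases hv : v = 0
    · simp [hv]
    · obtain ⟨S', hS'S, _, _, hv'⟩ := hS v hv
      rw [hv']
      exact Submodule.sum_mem _ fun s hs => Submodule.subset_span (hS'S hs)
  have hfr : Module.finrank (ZMod 2) (Fin T → ZMod 2) = T := by simp
  have hTle : T ≤ S.card := by
    have h1 := finrank_span_finset_le_card (R := ZMod 2) S
    unfold Set.finrank at h1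
    rw [hspan, finrank_top, hfr] at h1
    exact h1
  have hcard : S.card = T := le_antisymm (by omega) hTle
  have hli : LinearIndependent (ZMod 2) ((↑) : ↥S → (Fin T → ZMod 2)) := by
    apply linearIndependent_of_top_le_span_of_card_eq_finrank
    · refine le_of_eq ?_
      rw [← hspan]
      congr 1
      ext x
      simp
    · rw [Fintype.card_coe, hfr, hcard]
  have key : ∀ A : Finset (Fin T → ZMod 2), A ⊆ S →
      ∑ t : ↥S, (if ↑t ∈ A then (1:ZMod 2) else 0) • (t : Fin T → ZMod 2)
        = ∑ s ∈ A, s := by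
    intro A hA
    simp only [ite_smul, one_smul, zero_smul]
    rw [Finset.sum_coe_sort S (fun s => if s ∈ A then s else 0),
      Finset.sum_ite_mem, Finset.inter_eq_right.mpr hA]
  have hli' := Fintype.linearIndependent_iff.mp hli
  by_cases hv : (∑ s ∈ S, s) = 0
  · have h0 : ∑ t : ↥S, (1:ZMod 2) • (t : Fin T → ZMod 2) = 0 := by
      have := key S le_rfl
      simp only [Finset.coe_mem, if_pos] at this
      rw [this, hv]
    have := hli' (fun _ => 1) h0
    obtain ⟨t, ht⟩ : S.Nonempty := Finset.card_pos.mp (by omega)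
    exact one_ne_zero (this ⟨t, ht⟩)
  · obtain ⟨S', hsub, hne, hklt, hv'⟩ := hS _ hv
    set g : ↥S → ZMod 2 := fun t => (if ↑t ∈ S' then 1 else 0) + 1 with hg
    have hsum : ∑ t : ↥S, g t • (t : Fin T → ZMod 2) = 0 := by
      simp only [hg, add_smul, one_smul]
      rw [Finset.sum_add_distrib, key S' hsub,
        Finset.sum_coe_sort S (fun s => s), ← hv']
      funext i
      exact CharTwo.add_self_eq_zero _
    have hall := hli' g hsum
    have hSsub : S ⊆ S' := by
      intro s hs
      have := hall ⟨s, hs⟩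
      simp only [hg] at this
      by_contra hns
      rw [if_neg hns, zero_add] at this
      exact one_ne_zero this
    have := Finset.card_le_card hSsub
    omega
end

section
/- Let T ≥ 2 and let k satisfy ⌈T/2⌉ ≤ k < T. Then the minimum cardinality of a finite set S ⊆ F_2^T with the property that every nonzero vector v ∈ F_2^T is a sum of at most k elements of S equals exactly T + 1. -/
open Module

lemma sum_indep_ne' {V : Type*} [AddCommGroup V] [Module (ZMod 2) V]
    {S S' : Finset V} (li : LinearIndependent (ZMod 2) ((↑) : {x // x ∈ S} → V))
    (hsub : S' ⊆ S) (hne : S'.Nonempty) : ∑ s ∈ S', s ≠ 0 := by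
  classical
  intro h0
  obtain ⟨a, ha⟩ := hne
  set t : Finset {x // x ∈ S} := Finset.filter (fun x => x.1 ∈ S') S.attach with ht
  have key : ∑ x ∈ t, (1 : ZMod 2) • (x.1 : V) = 0 := by
    simp only [one_smul, ht]
    rw [Finset.sum_filter, Finset.sum_attach S (fun s => if s ∈ S' then s else 0),
      Finset.sum_ite_mem, Finset.inter_eq_right.mpr hsub]
    exact h0
  have := linearIndependent_iff'.mp li t (fun _ => (1 : ZMod 2)) key ⟨a, hsub ha⟩
    (by simp [ht, ha])
  simpa using this

/-- For `T ≥ 2` and `⌈T/2⌉ ≤ k < T`, the minimum cardinality of a finite set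
`S ⊆ F_2^T` such that every nonzero `v ∈ F_2^T` is a sum of at most `k` elements
of `S` equals exactly `T + 1`. -/
theorem stmt9 (T k : ℕ) (hT : 2 ≤ T) (hk1 : (T + 1) / 2 ≤ k) (hkT : k < T) :
    IsLeast {c : ℕ | ∃ S : Finset (Fin T → ZMod 2), S.card = c ∧
      ∀ v : Fin T → ZMod 2, v ≠ 0 →
        ∃ S' ⊆ S, S'.Nonempty ∧ S'.card ≤ k ∧ v = ∑ s ∈ S', s} (T + 1) := by
  classical
  constructor
  · -- membership: construct S of size T+1
    set e : Fin T → (Fin T → ZMod 2) := fun i => Pi.single i 1 with he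
    have einj : Function.Injective e := by
      intro i j hij
      by_contra hne
      have := congrFun hij j
      simp [e, Pi.single_apply, Ne.symm hne] at this
    have hone : ∀ B : Finset (Fin T), (fun _ => (1:ZMod 2)) ∉ B.image e := by
      intro B hmem
      obtain ⟨i, _, hi⟩ := Finset.mem_image.mp hmem
      haveI : Nontrivial (Fin T) := Fin.nontrivial_iff_two_le.mpr hT
      obtain ⟨j, hj⟩ : ∃ j : Fin T, j ≠ i := exists_ne i
      have := congrFun hi j
      simp [e, Pi.single_apply, hj] at this
    have hsum_image : ∀ B : Finset (Fin T),
        ∑ s ∈ B.image e, s = fun j => if j ∈ B then (1:ZMod 2) else 0 := by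
      intro B
      rw [Finset.sum_image (fun a _ b _ h => einj h)]
      funext j
      rw [Finset.sum_apply]
      simp only [e, Pi.single_apply]
      exact Finset.sum_ite_eq B j (fun _ => (1:ZMod 2))
    refine ⟨insert (fun _ => 1) (Finset.univ.image e), ?_, ?_⟩
    · rw [Finset.card_insert_of_notMem (hone _), Finset.card_image_of_injective _ einj]
      simp
    intro v hv
    have hv2 : ∀ x : ZMod 2, x = 0 ∨ x = 1 := by decide
    set A := Finset.univ.filter (fun i => v i = 1) with hA
    have hAne : A.Nonempty := by
      obtain ⟨i, hi⟩ := Function.ne_iff.mp hv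
      refine ⟨i, ?_⟩
      simp only [hA, Finset.mem_filter, Finset.mem_univ, true_and]
      rcases hv2 (v i) with h | h
      · exact absurd h hi
      · exact h
    by_cases hAk : A.card ≤ k
    · refine ⟨A.image e, ?_, hAne.image e, le_trans Finset.card_image_le hAk, ?_⟩
      · exact (Finset.image_subset_image (Finset.subset_univ A)).trans (Finset.subset_insert _ _)
      · rw [hsum_image A]
        funext j
        simp only [hA, Finset.mem_filter, Finset.mem_univ, true_and]
        rcases hv2 (v j) with h | h <;> simp [h]
    · push_neg at hAk
      have hT2k : T + 1 ≤ 2 * k + 1 := by omega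
      have hAcard : A.card ≤ T := by simpa using Finset.card_filter_le Finset.univ (fun i => v i = 1)
      refine ⟨insert (fun _ => 1) (Aᶜ.image e), ?_, ⟨_, Finset.mem_insert_self _ _⟩, ?_, ?_⟩
      · exact Finset.insert_subset_insert _
          (Finset.image_subset_image (Finset.subset_univ Aᶜ))
      · rw [Finset.card_insert_of_notMem (hone _)]
        have h1 : (Aᶜ.image e).card ≤ Aᶜ.card := Finset.card_image_le
        have h2 : Aᶜ.card = T - A.card := by
          rw [Finset.card_compl, Fintype.card_fin]
        omega
      · rw [Finset.sum_insert (hone _), hsum_image Aᶜ]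
        funext j
        simp only [Pi.add_apply, Finset.mem_compl]
        by_cases hj : j ∈ A
        · have : v j = 1 := by
            simpa [hA] using hj
          simp [hj, this]
        · have : v j = 0 := by
            simp only [hA, Finset.mem_filter, Finset.mem_univ, true_and] at hj
            rcases hv2 (v j) with h | h
            · exact h
            · exact absurd h hj
          simp [hj, this]
          rfl
  · -- lower bound
    rintro c ⟨S, rfl, hS⟩
    have hspan : ⊤ ≤ Submodule.span (ZMod 2) (↑S : Set (Fin T → ZMod 2)) := by
      rintro v -
      by_cases hv : v = 0
      · simp [hv]
      obtain ⟨S', hsub, _, _, hsum⟩ := hS v hv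
      rw [hsum]
      exact Submodule.sum_mem _ fun s hs => Submodule.subset_span (hsub hs)
    by_contra hc
    push_neg at hc
    have hge : T ≤ S.card := by
      by_contra h
      push_neg at h
      have hlt := span_lt_top_of_card_lt_finrank (R := ZMod 2)
        (s := ((↑S : Set (Fin T → ZMod 2))))
        (by rw [Finset.toFinset_coe, Module.finrank_fin_fun]; exact h)
      exact absurd (top_le_iff.mp hspan) hlt.ne
    have hcard : S.card = T := by omega
    have li : LinearIndependent (ZMod 2) ((↑) : {x // x ∈ S} → (Fin T → ZMod 2)) := by
      apply linearIndependent_of_top_le_span_of_card_eq_finrank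
      · rwa [Subtype.range_coe]
      · simp [hcard, Module.finrank_fin_fun]
    have hSne : S.Nonempty := Finset.card_pos.mp (by omega)
    have hvne : ∑ s ∈ S, s ≠ 0 := sum_indep_ne' li (Finset.Subset.refl S) hSne
    obtain ⟨S', hsub, hne, hcardk, hsum⟩ := hS _ hvne
    have hdiff : ∑ s ∈ S \ S', s = 0 := by
      rw [Finset.sum_sdiff_eq_sub hsub, ← hsum]
      simp
    have hdne : (S \ S').Nonempty := by
      rw [Finset.sdiff_nonempty]
      intro hle
      have := Finset.card_le_card hle
      omega
    exact sum_indep_ne' li Finset.sdiff_subset hdne hdiff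
end

section
/- Let n, k, t be natural numbers with 1 ≤ k, 2k ≤ t + 1, and n ≤ ∑_{i=1}^{k} C(t, i). Then, as real numbers, t ≥ (k^{(k−1)/k} / e) · n^{1/k}, where e = exp(1) and C(·,·) denotes the binomial coefficient. -/
/-- Monotonicity of binomial coefficients up to (roughly) the middle. -/
lemma choose_mono_aux (t : ℕ) : ∀ i j : ℕ, i ≤ j → 2 * j ≤ t + 1 →
    Nat.choose t i ≤ Nat.choose t j := by
  intro i j hij hj
  induction j with
  | zero => simpa [Nat.le_zero.mp hij]
  | succ m ih =>
    rcases Nat.lt_or_ge i (m + 1) with h | h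
    · have hstep : Nat.choose t m ≤ Nat.choose t (m + 1) := by
        rcases Nat.lt_or_ge m (t / 2) with hm | hm
        · exact Nat.choose_le_succ_of_lt_half_left hm
        · -- then 2*(m+1) = t+1, so t = 2m+1 and the two coefficients are equal
          have h1 : t + 1 ≤ 2 * (m + 1) := by
            omega
          have ht : t = 2 * m + 1 := by omega
          subst ht
          have := Nat.choose_symm (n := 2 * m + 1) (k := m + 1) (by omega)
          simp only [show 2 * m + 1 - (m + 1) = m by omega] at this
          omega
      exact le_trans (ih (Nat.lt_succ_iff.mp h) (by omega)) hstep
    · have : i = m + 1 := le_antisymm hij h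
      simp [this]

/-- If `1 ≤ k`, `2k ≤ t + 1` and `n ≤ ∑_{i=1}^{k} C(t, i)`, then, over the reals,
`t ≥ (k^{(k−1)/k} / e) · n^{1/k}`. -/
theorem stmt10 (n k t : ℕ) (hk : 1 ≤ k) (hkt : 2 * k ≤ t + 1)
    (hn : n ≤ ∑ i ∈ Finset.Icc 1 k, Nat.choose t i) :
    (t : ℝ) ≥ ((k : ℝ) ^ (((k : ℝ) - 1) / (k : ℝ)) / Real.exp 1) *
      (n : ℝ) ^ (1 / (k : ℝ)) := by
  have hkR : (0 : ℝ) < k := by exact_mod_cast hk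
  have he : (0 : ℝ) < Real.exp 1 := Real.exp_pos 1
  -- Step 1 : n ≤ k * C(t,k)
  have h1 : n ≤ k * Nat.choose t k := by
    calc n ≤ ∑ i ∈ Finset.Icc 1 k, Nat.choose t i := hn
    _ ≤ ∑ _i ∈ Finset.Icc 1 k, Nat.choose t k := by
        apply Finset.sum_le_sum
        intro i hi
        exact choose_mono_aux t i k (Finset.mem_Icc.mp hi).2 hkt
    _ = k * Nat.choose t k := by
        rw [Finset.sum_const, Nat.card_Icc]
        simp [Nat.mul_comm]
  -- Step 2 : C(t,k) ≤ t^k / k!  over ℝ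
  have h2 : (Nat.choose t k : ℝ) ≤ (t : ℝ) ^ k / (Nat.factorial k : ℝ) := by
    have := Nat.choose_le_pow_div (α := ℝ) k t
    simpa using this
  -- Step 3 : k^k ≤ k! * e^k
  have h3 : (k : ℝ) ^ k ≤ (Nat.factorial k : ℝ) * Real.exp 1 ^ k := by
    have hsum : (k : ℝ) ^ k / (Nat.factorial k : ℝ) ≤ Real.exp (k : ℝ) := by
      refine le_trans ?_ (Real.sum_le_exp_of_nonneg (x := (k : ℝ)) (by positivity) (k + 1))
      exact Finset.single_le_sum (f := fun i => (k : ℝ) ^ i / (Nat.factorial i : ℝ))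
        (fun i _ => by positivity) (Finset.self_mem_range_succ k)
    have hfac : (0 : ℝ) < (Nat.factorial k : ℝ) := by
      exact_mod_cast Nat.factorial_pos k
    have := (div_le_iff₀ hfac).mp hsum
    calc (k : ℝ) ^ k ≤ Real.exp (k : ℝ) * (Nat.factorial k : ℝ) := this
    _ = (Nat.factorial k : ℝ) * Real.exp 1 ^ k := by
        rw [← Real.exp_nat_mul, mul_one, mul_comm]
  -- Combine : n * k^(k-1) ≤ t^k * e^k
  have hfac : (0 : ℝ) < (Nat.factorial k : ℝ) := by exact_mod_cast Nat.factorial_pos k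
  have hkey : (n : ℝ) * (k : ℝ) ^ (k - 1) ≤ (t : ℝ) ^ k * Real.exp 1 ^ k := by
    have hkmul : (n : ℝ) * (k : ℝ) ^ k ≤ (k : ℝ) * ((t : ℝ) ^ k * Real.exp 1 ^ k) := by
      have h1R : (n : ℝ) ≤ (k : ℝ) * (Nat.choose t k : ℝ) := by exact_mod_cast h1
      calc (n : ℝ) * (k : ℝ) ^ k
          ≤ ((k : ℝ) * (Nat.choose t k : ℝ)) * (k : ℝ) ^ k := by
            apply mul_le_mul_of_nonneg_right h1R (by positivity)
        _ ≤ ((k : ℝ) * ((t : ℝ) ^ k / (Nat.factorial k : ℝ))) * ((Nat.factorial k : ℝ) * Real.exp 1 ^ k) := by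
            apply mul_le_mul
            · exact mul_le_mul_of_nonneg_left h2 (by positivity)
            · exact h3
            · positivity
            · positivity
        _ = (k : ℝ) * ((t : ℝ) ^ k * Real.exp 1 ^ k) := by
            field_simp
    have hpow : (k : ℝ) ^ k = (k : ℝ) * (k : ℝ) ^ (k - 1) := by
      rw [← pow_succ' (k : ℝ) (k - 1), Nat.sub_add_cancel hk]
    rw [hpow] at hkmul
    have : (k : ℝ) * ((n : ℝ) * (k : ℝ) ^ (k - 1)) ≤ (k : ℝ) * ((t : ℝ) ^ k * Real.exp 1 ^ k) := by
      linarith [hkmul]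
    exact le_of_mul_le_mul_left this hkR
  -- Now the rpow manipulation
  set A : ℝ := ((k : ℝ) ^ (((k : ℝ) - 1) / (k : ℝ)) / Real.exp 1) * (n : ℝ) ^ (1 / (k : ℝ)) with hA
  have hA0 : 0 ≤ A := by positivity
  have hApow : A ^ k = (n : ℝ) * (k : ℝ) ^ (k - 1) / Real.exp 1 ^ k := by
    rw [hA, mul_pow, div_pow]
    have e1 : ((k : ℝ) ^ (((k : ℝ) - 1) / (k : ℝ))) ^ k = (k : ℝ) ^ (k - 1) := by
      rw [← Real.rpow_natCast ((k : ℝ) ^ (((k : ℝ) - 1) / (k : ℝ))) k,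
        ← Real.rpow_mul (le_of_lt hkR), div_mul_cancel₀ _ (ne_of_gt hkR)]
      rw [show ((k : ℝ) - 1) = ((k - 1 : ℕ) : ℝ) by push_cast [hk]; ring,
        Real.rpow_natCast]
    have e2 : ((n : ℝ) ^ (1 / (k : ℝ))) ^ k = (n : ℝ) := by
      rw [← Real.rpow_natCast ((n : ℝ) ^ (1 / (k : ℝ))) k,
        ← Real.rpow_mul (Nat.cast_nonneg n), one_div,
        inv_mul_cancel₀ (ne_of_gt hkR), Real.rpow_one]
    rw [e1, e2]
    ring
  have hpowle : A ^ k ≤ (t : ℝ) ^ k := by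
    rw [hApow, div_le_iff₀ (by positivity)]
    exact hkey
  have := pow_le_pow_left₀ hA0 (le_refl A) k
  exact pow_le_pow_iff_left₀ hA0 (Nat.cast_nonneg t) (by omega) |>.mp hpowle
end

section
/- Let g_1, …, g_T be linearly independent vectors in F_2^m, and let h_1, …, h_r be vectors of the form h_j = ∑_{i ∈ I_j} g_i for subsets I_j ⊆ {1, …, T}. For i ∈ {1,…,T} define the outbound set O_i = { j : i ∈ I_j }. Suppose there is a permutation i_1, …, i_T of {1, …, T} such that O_{i_T} ⊆ O_{i_{T−1}} ⊆ ⋯ ⊆ O_{i_1}. Then there exist T vectors a_1, …, a_T ∈ F_2^m such that each of the vectors g_1, …, g_T, h_1, …, h_r is a sum of at most 2 of the vectors a_1, …, a_T. -/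
/-- Let `g_1, …, g_T` be linearly independent vectors in `F_2^m` and let
`h_j = ∑_{i ∈ I_j} g_i`. If there is a permutation `σ` of `{1,…,T}` such that the
outbound sets `O_{σ(t)} = {j : σ(t) ∈ I_j}` form a decreasing chain
(`O_{σ(t)} ⊆ O_{σ(s)}` whenever `s ≤ t`), then there exist `T` vectors
`a_1, …, a_T` such that each `g_i` and each `h_j` is a sum of at most `2` of them. -/
theorem stmt12 (m T r : ℕ) (g : Fin T → (Fin m → ZMod 2))
    (hg : LinearIndependent (ZMod 2) g)
    (I : Fin r → Finset (Fin T)) (h : Fin r → (Fin m → ZMod 2))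
    (hh : ∀ j, h j = ∑ i ∈ I j, g i)
    (σ : Equiv.Perm (Fin T))
    (hσ : ∀ s t : Fin T, s ≤ t → {j | σ t ∈ I j} ⊆ {j | σ s ∈ I j}) :
    ∃ a : Fin T → (Fin m → ZMod 2),
      (∀ i, (∃ t, g i = a t) ∨ (∃ s t, s ≠ t ∧ g i = a s + a t) ∨ g i = 0) ∧
      (∀ j, (∃ t, h j = a t) ∨ (∃ s t, s ≠ t ∧ h j = a s + a t) ∨ h j = 0) := by
  classical
  set a : Fin T → (Fin m → ZMod 2) := fun t => ∑ s ∈ Finset.Iic t, g (σ s) with ha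
  have self_add : ∀ v : Fin m → ZMod 2, v + v = 0 := by
    intro v; funext x; simp
    exact CharTwo.add_self_eq_zero _
  refine ⟨a, ?_, ?_⟩
  · intro i
    set t := σ.symm i with ht
    have hgi : g i = g (σ t) := by simp [ht]
    by_cases h0 : (t : ℕ) = 0
    · left
      refine ⟨t, ?_⟩
      have hsing : Finset.Iic t = {t} := by
        ext s
        simp only [Finset.mem_Iic, Finset.mem_singleton, Fin.le_def, Fin.ext_iff]
        omega
      rw [hgi]
      simp only [ha, hsing, Finset.sum_singleton]
    · right; left
      have htpos : 0 < (t : ℕ) := Nat.pos_of_ne_zero h0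
      set t' : Fin T := ⟨(t : ℕ) - 1, by have := t.isLt; omega⟩ with ht'
      refine ⟨t', t, by intro hc; simp [ht', Fin.ext_iff] at hc; omega, ?_⟩
      have hIio : Finset.Iio t = Finset.Iic t' := by
        ext s
        simp only [Finset.mem_Iio, Finset.mem_Iic, Fin.lt_def, Fin.le_def, ht']
        omega
      have hsplit : a t = g (σ t) + a t' := by
        rw [ha]
        simp only
        rw [← hIio, ← Finset.Iio_insert,
          Finset.sum_insert (by simp)]
      rw [hgi, hsplit, add_comm (g (σ t)) (a t'), ← add_assoc, self_add, zero_add]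
  · intro j
    set S : Finset (Fin T) := Finset.univ.filter (fun t => σ t ∈ I j) with hS
    have hhj : h j = ∑ t ∈ S, g (σ t) := by
      rw [hh j]
      have himg : S.image σ = I j := by
        ext i
        simp only [hS, Finset.mem_image, Finset.mem_filter, Finset.mem_univ, true_and]
        constructor
        · rintro ⟨t, hti, rfl⟩; exact hti
        · intro hi; exact ⟨σ.symm i, by simpa using hi, by simp⟩
      rw [← himg, Finset.sum_image (fun x _ y _ hxy => σ.injective hxy)]
    rcases S.eq_empty_or_nonempty with hSe | hSne
    · right; right
      rw [hhj, hSe, Finset.sum_empty]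
    · left
      set k := S.max' hSne with hk
      have hSIic : S = Finset.Iic k := by
        ext t
        simp only [Finset.mem_Iic]
        constructor
        · intro htS; exact S.le_max' t htS
        · intro htk
          have hkS : k ∈ S := S.max'_mem hSne
          simp only [hS, Finset.mem_filter, Finset.mem_univ, true_and] at hkS ⊢
          exact hσ t k htk hkS
      exact ⟨k, by rw [hhj, hSIic, ha]⟩
end

section
/- Let g_1, …, g_{T+1} be T + 1 vectors in F_2^m whose span has dimension T. Then there exist T vectors a_1, …, a_T ∈ F_2^m such that each g_i, i ∈ {1, …, T+1}, is a sum of at most 2 of the vectors a_1, …, a_T. -/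
/-- If `g_1, …, g_{T+1}` are `T + 1` vectors in `F_2^m` whose span has dimension
`T`, then there exist `T` vectors `a_1, …, a_T ∈ F_2^m` such that each `g_i` is a
sum of at most `2` of the vectors `a_1, …, a_T`. -/
theorem stmt13 (m T : ℕ) (g : Fin (T + 1) → (Fin m → ZMod 2))
    (hT : Module.finrank (ZMod 2) (Submodule.span (ZMod 2) (Set.range g)) = T) :
    ∃ a : Fin T → (Fin m → ZMod 2),
      ∀ i, (∃ t, g i = a t) ∨ (∃ s t, s ≠ t ∧ g i = a s + a t) ∨ g i = 0 := by
  classical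
  obtain ⟨b, hbs, hspan, hind⟩ := exists_linearIndependent (ZMod 2) (Set.range g)
  have hfin : b.Finite := (Set.finite_range g).subset hbs
  haveI := hfin.fintype
  have hcard : b.toFinset.card = T := by
    rw [← hT, ← hspan]
    exact (finrank_span_set_eq_card hind).symm
  let e : b.toFinset ≃ Fin T := b.toFinset.equivFinOfCardEq hcard
  let c : Fin T → (Fin m → ZMod 2) := fun t => ((e.symm t : b.toFinset) : Fin m → ZMod 2)
  have hc : ∀ v ∈ b, ∃ t, c t = v := fun v hv =>
    ⟨e ⟨v, Set.mem_toFinset.2 hv⟩, by simp [c]⟩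
  have h2 : ∀ x : Fin m → ZMod 2, x + x = 0 := by
    intro x; funext j
    have : ∀ y : ZMod 2, y + y = 0 := by decide
    simp [this]
  by_cases hall : ∀ i, g i ∈ b
  · refine ⟨c, fun i => Or.inl ?_⟩
    obtain ⟨t, ht⟩ := hc _ (hall i)
    exact ⟨t, ht.symm⟩
  push_neg at hall
  obtain ⟨i0, hi0⟩ := hall
  have huniq : ∀ i, i ≠ i0 → g i ∈ b := by
    intro i hne
    by_contra hgi
    have hsub : b.toFinset ⊆ ((Finset.univ.erase i0).erase i).image g := by
      intro v hv
      have hvb : v ∈ b := Set.mem_toFinset.1 hv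
      obtain ⟨k, hk⟩ := hbs hvb
      refine Finset.mem_image.2 ⟨k, ?_, hk⟩
      refine Finset.mem_erase.2 ⟨?_, Finset.mem_erase.2 ⟨?_, Finset.mem_univ _⟩⟩
      · rintro rfl; exact hgi (hk ▸ hvb)
      · rintro rfl; exact hi0 (hk ▸ hvb)
    have hle : T ≤ T - 1 := by
      calc T = b.toFinset.card := hcard.symm
        _ ≤ (((Finset.univ.erase i0).erase i).image g).card := Finset.card_le_card hsub
        _ ≤ ((Finset.univ.erase i0).erase i).card := Finset.card_image_le
        _ = T - 1 := by
            rw [Finset.card_erase_of_mem (Finset.mem_erase.2 ⟨hne, Finset.mem_univ _⟩),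
              Finset.card_erase_of_mem (Finset.mem_univ _)]
            simp
    have hT0 : T ≠ 0 := by
      rintro rfl
      exact hne (Fin.ext (by omega))
    omega
  -- express g i0 as a sum of some of the c t
  have hmem : g i0 ∈ Submodule.span (ZMod 2) (b.toFinset : Set (Fin m → ZMod 2)) := by
    rw [Set.coe_toFinset, hspan]
    exact Submodule.subset_span (Set.mem_range_self i0)
  obtain ⟨f, -, hf⟩ := Submodule.mem_span_finset.1 hmem
  have hcinj : Function.Injective c := by
    intro s t hst
    have : e.symm s = e.symm t := Subtype.ext hst
    exact e.symm.injective this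
  set S : Finset (Fin T) := Finset.univ.filter (fun t => f (c t) = 1) with hS
  have hsumS : g i0 = ∑ t ∈ S, c t := by
    have h01 : ∀ y : ZMod 2, y = 0 ∨ y = 1 := by decide
    have hb2 : ∑ v ∈ b.toFinset, f v • v = ∑ t : Fin T, f (c t) • c t := by
      rw [← Finset.sum_attach b.toFinset (fun v => f v • v)]
      exact (Fintype.sum_equiv e.symm _ _ (fun t => rfl)).symm
    rw [← hf, hb2]
    rw [Finset.sum_filter]
    apply Finset.sum_congr rfl
    intro t _
    rcases h01 (f (c t)) with h | h <;> simp [h]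
  rcases Finset.eq_empty_or_nonempty S with hSe | hSne
  · -- g i0 = 0
    refine ⟨c, fun i => ?_⟩
    by_cases hi : i = i0
    · subst hi
      right; right
      rw [hsumS, hSe, Finset.sum_empty]
    · obtain ⟨t, ht⟩ := hc _ (huniq i hi)
      exact Or.inl ⟨t, ht.symm⟩
  -- chain construction
  set a : Fin T → (Fin m → ZMod 2) :=
    fun t => if t ∈ S then ∑ s ∈ S.filter (· ≤ t), c s else c t with ha
  refine ⟨a, fun i => ?_⟩
  by_cases hi : i = i0
  · subst hi
    left
    refine ⟨S.max' hSne, ?_⟩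
    have hmax : S.filter (· ≤ S.max' hSne) = S := by
      apply Finset.filter_true_of_mem
      intro s hs
      exact Finset.le_max' S s hs
    rw [ha]
    simp only [S.max'_mem hSne, if_true, hmax]
    exact hsumS
  · obtain ⟨t0, ht0⟩ := hc _ (huniq i hi)
    by_cases htS : t0 ∈ S
    · by_cases hmin : t0 = S.min' hSne
      · -- a t0 = c t0
        left
        refine ⟨t0, ?_⟩
        have hfil : S.filter (· ≤ t0) = {t0} := by
          ext s
          simp only [Finset.mem_filter, Finset.mem_singleton]
          constructor
          · rintro ⟨hsS, hst⟩
            exact le_antisymm hst (hmin ▸ S.min'_le s hsS)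
          · rintro rfl; exact ⟨htS, le_refl _⟩
        rw [ha]
        simp only [htS, if_true, hfil, Finset.sum_singleton]
        exact ht0.symm
      · -- predecessor
        have hPne : (S.filter (· < t0)).Nonempty := by
          refine ⟨S.min' hSne, Finset.mem_filter.2 ⟨S.min'_mem hSne, ?_⟩⟩
          exact lt_of_le_of_ne (S.min'_le t0 htS) (fun h => hmin h.symm)
        obtain ⟨p, hpP, hple⟩ : ∃ p ∈ S.filter (· < t0),
            ∀ s ∈ S.filter (· < t0), s ≤ p :=
          ⟨_, Finset.max'_mem _ hPne, fun s hs => Finset.le_max' _ s hs⟩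
        have hpS : p ∈ S := (Finset.mem_filter.1 hpP).1
        have hplt : p < t0 := (Finset.mem_filter.1 hpP).2
        have hfil : S.filter (· ≤ t0) = insert t0 (S.filter (· ≤ p)) := by
          ext s
          simp only [Finset.mem_filter, Finset.mem_insert]
          constructor
          · rintro ⟨hsS, hst⟩
            rcases eq_or_lt_of_le hst with h | h
            · exact Or.inl h
            · exact Or.inr ⟨hsS, hple s (Finset.mem_filter.2 ⟨hsS, h⟩)⟩
          · rintro (rfl | ⟨hsS, hsp⟩)
            · exact ⟨htS, le_refl _⟩
            · exact ⟨hsS, le_of_lt (lt_of_le_of_lt hsp hplt)⟩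
        have ht0nm : t0 ∉ S.filter (· ≤ p) := by
          intro h
          exact absurd ((Finset.mem_filter.1 h).2) (not_le.2 hplt)
        have hat0 : a t0 = c t0 + a p := by
          rw [ha]
          simp only [htS, hpS, if_true]
          rw [hfil, Finset.sum_insert ht0nm]
        right; left
        refine ⟨t0, p, ne_of_gt hplt, ?_⟩
        rw [hat0, add_assoc, h2, add_zero]
        exact ht0.symm
    · left
      refine ⟨t0, ?_⟩
      rw [ha]
      simp only [htS, if_false]
      exact ht0.symm
end
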